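/- For nonempty compact metric spaces (X₁,ρ₁) and (X₂,ρ₂), the quantum Gromov–Hausdorff distance between the associated compact quantum metric spaces satisfies dist_q((Lip(X₁),L_{ρ₁}), (Lip(X₂),L_{ρ₂})) ≤ dist_GH(X₁,X₂). -/

import Mathlib

open scoped ENNReal NNReal

/-- An order-unit space in the sense of Kadison: a partially ordered real vector
space with a positive order unit `e` satisfying the order-unit property and the
Archimedean property. -/
structure OrderUnitSpace : Type 1 where
  carrier : Type
  [toAddCommGroup : AddCommGroup carrier]
  [toModule : Module ℝ carrier]
  [toPartialOrder : PartialOrder carrier]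
  add_le_add_left' : ∀ a b : carrier, a ≤ b → ∀ c : carrier, c + a ≤ c + b
  smul_nonneg' : ∀ (r : ℝ) (a : carrier), 0 ≤ r → 0 ≤ a → 0 ≤ r • a
  e : carrier
  e_nonneg : 0 ≤ e
  orderUnit : ∀ a : carrier, ∃ r : ℝ, a ≤ r • e
  arch : ∀ a : carrier, (∀ r : ℝ, 0 < r → a ≤ r • e) → a ≤ 0

attribute [instance] OrderUnitSpace.toAddCommGroup OrderUnitSpace.toModule
  OrderUnitSpace.toPartialOrder

/-- The topology generated by the open balls of a distance function. -/
def ballTopology {S : Type*} (ρ : S → S → ℝ≥0∞) : TopologicalSpace S :=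
  TopologicalSpace.generateFrom
    {U : Set S | ∃ (μ : S) (ε : ℝ≥0∞), 0 < ε ∧ U = {ν | ρ μ ν < ε}}

/-- The quotient seminorm of `L` along the surjection `π`. -/
noncomputable def quotientSeminorm {α β : Type*} (π : α → β) (L : α → ℝ) (b : β) : ℝ :=
  sInf {r : ℝ | ∃ a, π a = b ∧ L a = r}

/-- `L` induces `LB` via `π`, i.e. `LB` is the quotient seminorm of `L` for `π`. -/
def Induces {α β : Type*} (π : α → β) (L : α → ℝ) (LB : β → ℝ) : Prop :=
  ∀ b, LB b = quotientSeminorm π L b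

/-- Hausdorff distance between two subsets with respect to a distance function. -/
noncomputable def hausdorffDistWith {S : Type*} (ρ : S → S → ℝ≥0∞) (T U : Set S) : ℝ≥0∞ :=
  max (⨆ t ∈ T, ⨅ u ∈ U, ρ t u) (⨆ u ∈ U, ⨅ t ∈ T, ρ t u)

namespace OrderUnitSpace

variable (A B : OrderUnitSpace)

theorem le_of_sub_nonneg'' {x y : A.carrier} (h : 0 ≤ y - x) : x ≤ y := by
  have h2 := A.add_le_add_left' 0 (y - x) h x
  have h3 : x + (y - x) = y := by abel
  rw [add_zero, h3] at h2
  exact h2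

theorem smul_e_mono {r s : ℝ} (h : r ≤ s) : r • A.e ≤ s • A.e := by
  apply A.le_of_sub_nonneg''
  have h3 : s • A.e - r • A.e = (s - r) • A.e := by rw [sub_smul]
  rw [h3]
  exact A.smul_nonneg' _ _ (by linarith) A.e_nonneg

/-- The order-unit norm. -/
noncomputable def onorm (a : A.carrier) : ℝ :=
  sInf {r : ℝ | -(r • A.e) ≤ a ∧ a ≤ r • A.e}

/-- A state: a unital positive linear functional. -/
def IsState (μ : A.carrier →ₗ[ℝ] ℝ) : Prop :=
  μ A.e = 1 ∧ ∀ a : A.carrier, 0 ≤ a → 0 ≤ μ a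

/-- The state space. -/
def State : Type := {μ : A.carrier →ₗ[ℝ] ℝ // A.IsState μ}

/-- The weak-* topology on the state space. -/
instance : TopologicalSpace A.State :=
  TopologicalSpace.induced (fun μ : A.State => (μ.1 : A.carrier → ℝ)) Pi.topologicalSpace

/-- The metric `ρ_L` on the state space defined by a seminorm `L`. -/
noncomputable def rho (L : Seminorm ℝ A.carrier) (μ ν : A.State) : ℝ≥0∞ :=
  ⨆ a : {a : A.carrier // L a ≤ 1}, ENNReal.ofReal |μ.1 a.1 - ν.1 a.1|

/-- A Lipschitz seminorm: its null space is exactly `ℝ e`. -/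
def IsLipschitz (L : Seminorm ℝ A.carrier) : Prop :=
  ∀ a : A.carrier, L a = 0 ↔ ∃ t : ℝ, a = t • A.e

/-- A Lip-norm: a Lipschitz seminorm whose metric `ρ_L` induces the weak-* topology. -/
def IsLipNorm (L : Seminorm ℝ A.carrier) : Prop :=
  A.IsLipschitz L ∧ ballTopology (A.rho L) = (inferInstance : TopologicalSpace A.State)

/-- The diameter of the state space for `ρ_L`. -/
noncomputable def diam (L : Seminorm ℝ A.carrier) : ℝ≥0∞ :=
  ⨆ (μ : A.State) (ν : A.State), A.rho L μ ν

/-- The radius: half the diameter. -/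
noncomputable def radius (L : Seminorm ℝ A.carrier) : ℝ≥0∞ := A.diam L / 2

/-- Morphism of order-unit spaces: a unital positive linear map. -/
def IsMorphism (f : A.carrier →ₗ[ℝ] B.carrier) : Prop :=
  f A.e = B.e ∧ ∀ a : A.carrier, 0 ≤ a → 0 ≤ f a

/-- Pull back a state along a morphism; this is `S(π)`. -/
noncomputable def pullState (f : A.carrier →ₗ[ℝ] B.carrier) (hf : A.IsMorphism B f)
    (μ : B.State) : A.State :=
  ⟨(μ.1).comp f, by
    constructor
    · rw [LinearMap.comp_apply, hf.1]; exact μ.2.1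
    · intro a ha; exact μ.2.2 _ (hf.2 a ha)⟩

/-- The direct sum `A ⊕ B` as an order-unit space. -/
@[reducible] def prod : OrderUnitSpace where
  carrier := A.carrier × B.carrier
  add_le_add_left' := by
    intro a b hab c
    rw [Prod.le_def] at hab ⊢
    exact ⟨A.add_le_add_left' _ _ hab.1 _, B.add_le_add_left' _ _ hab.2 _⟩
  smul_nonneg' := by
    intro r a hr ha
    rw [Prod.le_def] at ha ⊢
    exact ⟨A.smul_nonneg' r a.1 hr ha.1, B.smul_nonneg' r a.2 hr ha.2⟩
  e := (A.e, B.e)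
  e_nonneg := by
    rw [Prod.le_def]
    exact ⟨A.e_nonneg, B.e_nonneg⟩
  orderUnit := by
    intro a
    obtain ⟨r₁, h1⟩ := A.orderUnit a.1
    obtain ⟨r₂, h2⟩ := B.orderUnit a.2
    refine ⟨max r₁ r₂, ?_⟩
    rw [Prod.le_def]
    exact ⟨le_trans h1 (A.smul_e_mono (le_max_left _ _)),
      le_trans h2 (B.smul_e_mono (le_max_right _ _))⟩
  arch := by
    intro a h
    rw [Prod.le_def]
    exact ⟨A.arch a.1 fun r hr => ((Prod.le_def.mp (h r hr)).1),
      B.arch a.2 fun r hr => ((Prod.le_def.mp (h r hr)).2)⟩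

/-- The embedding of `S(A)` into `S(A ⊕ B)` dual to the first coordinate projection. -/
noncomputable def leftState (μ : A.State) : (A.prod B).State :=
  ⟨(μ.1).comp (LinearMap.fst ℝ A.carrier B.carrier), by
    constructor
    · exact μ.2.1
    · intro p hp; exact μ.2.2 p.1 hp.1⟩

/-- The embedding of `S(B)` into `S(A ⊕ B)` dual to the second coordinate projection. -/
noncomputable def rightState (ν : B.State) : (A.prod B).State :=
  ⟨(ν.1).comp (LinearMap.snd ℝ A.carrier B.carrier), by
    constructor
    · exact ν.2.1
    · intro p hp; exact ν.2.2 p.2 hp.2⟩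

/-- The set `M(L_A, L_B)` of Lip-norms on `A ⊕ B` inducing `L_A` and `L_B`
via the coordinate projections. -/
def admissible (LA : Seminorm ℝ A.carrier) (LB : Seminorm ℝ B.carrier) :
    Set (Seminorm ℝ (A.prod B).carrier) :=
  {L | (A.prod B).IsLipNorm L ∧
    Induces (Prod.fst : A.carrier × B.carrier → A.carrier) (fun p => L p) (fun a => LA a) ∧
    Induces (Prod.snd : A.carrier × B.carrier → B.carrier) (fun p => L p) (fun b => LB b)}

/-- Quantum Gromov–Hausdorff distance. -/
noncomputable def distq (LA : Seminorm ℝ A.carrier) (LB : Seminorm ℝ B.carrier) : ℝ≥0∞ :=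
  ⨅ L ∈ A.admissible B LA LB,
    hausdorffDistWith ((A.prod B).rho L) (Set.range (A.leftState B)) (Set.range (A.rightState B))

end OrderUnitSpace

/-- The space of real-valued Lipschitz functions on a metric space, as a submodule
of `X → ℝ`. -/
def lipSubmodule (X : Type) [MetricSpace X] : Submodule ℝ (X → ℝ) where
  carrier := {f : X → ℝ | ∃ K : ℝ≥0, LipschitzWith K f}
  add_mem' := by
    rintro f g ⟨Kf, hf⟩ ⟨Kg, hg⟩
    exact ⟨Kf + Kg, hf.add hg⟩
  zero_mem' := ⟨0, LipschitzWith.const' (0 : ℝ)⟩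
  smul_mem' := by
    rintro c f ⟨K, hf⟩
    exact ⟨‖c‖₊ * K, (lipschitzWith_smul c).comp hf⟩

theorem mem_lipSubmodule {X : Type} [MetricSpace X] {f : X → ℝ} :
    f ∈ lipSubmodule X ↔ ∃ K : ℝ≥0, LipschitzWith K f := Iff.rfl

/-- The order-unit space of real-valued Lipschitz functions on a nonempty compact
metric space, with pointwise order and order unit the constant function `1`. -/
@[reducible] noncomputable def lipOUS (X : Type) [MetricSpace X] [CompactSpace X] [Nonempty X] :
    OrderUnitSpace where
  carrier := lipSubmodule X
  add_le_add_left' := by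
    intro f g hfg h
    rw [← Subtype.coe_le_coe] at hfg ⊢
    intro x
    simp only [Submodule.coe_add, Pi.add_apply]
    linarith [hfg x]
  smul_nonneg' := by
    intro r f hr hf
    rw [← Subtype.coe_le_coe] at hf ⊢
    intro x
    simp only [Submodule.coe_smul, Pi.smul_apply, smul_eq_mul, ZeroMemClass.coe_zero,
      Pi.zero_apply] at hf ⊢
    exact mul_nonneg hr (hf x)
  e := ⟨fun _ => (1 : ℝ), ⟨0, LipschitzWith.const' (1 : ℝ)⟩⟩
  e_nonneg := by
    rw [← Subtype.coe_le_coe]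
    intro x
    simp
  orderUnit := by
    intro f
    obtain ⟨K, hK⟩ := mem_lipSubmodule.mp f.2
    obtain ⟨x₀, -, hx₀⟩ := isCompact_univ.exists_isMaxOn Set.univ_nonempty
      hK.continuous.continuousOn
    refine ⟨f.1 x₀, ?_⟩
    rw [← Subtype.coe_le_coe]
    intro x
    simp only [Submodule.coe_smul, Pi.smul_apply, smul_eq_mul, mul_one]
    exact isMaxOn_iff.mp hx₀ x (Set.mem_univ x)
  arch := by
    intro f h
    rw [← Subtype.coe_le_coe]
    intro x
    simp only [ZeroMemClass.coe_zero, Pi.zero_apply]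
    refine le_of_forall_pos_le_add ?_
    intro r hr
    have := h r hr
    rw [← Subtype.coe_le_coe] at this
    have hx := this x
    simp only [Submodule.coe_smul, Pi.smul_apply, smul_eq_mul, mul_one] at hx
    linarith

/-- The Lipschitz constant of a real-valued function on a metric space:
`sup {|f x − f y| / d(x,y) : x ≠ y}`. -/
noncomputable def lipConst (X : Type) [MetricSpace X] (f : X → ℝ) : ℝ :=
  sSup ((fun p : X × X => |f p.1 - f p.2| / dist p.1 p.2) '' {p : X × X | p.1 ≠ p.2})

/-! ### Auxiliary lemmas -/

section LipConstLemmas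

variable {Y : Type} [MetricSpace Y]

theorem lipConst_nonneg (f : Y → ℝ) : 0 ≤ lipConst Y f := by
  apply Real.sSup_nonneg
  rintro x ⟨p, -, rfl⟩
  positivity

theorem lipConst_le {f : Y → ℝ} {K : ℝ} (hK : 0 ≤ K)
    (h : ∀ x y, |f x - f y| ≤ K * dist x y) : lipConst Y f ≤ K := by
  apply Real.sSup_le _ hK
  rintro r ⟨p, hp, rfl⟩
  have hd : 0 < dist p.1 p.2 := dist_pos.mpr hp
  rw [div_le_iff₀ hd]
  exact h p.1 p.2

theorem abs_sub_le_lipConst {f : Y → ℝ} {K0 : ℝ}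
    (hb : ∀ x y, |f x - f y| ≤ K0 * dist x y) (x y : Y) :
    |f x - f y| ≤ lipConst Y f * dist x y := by
  rcases eq_or_ne x y with rfl | hxy
  · simp
  · have hd : 0 < dist x y := dist_pos.mpr hxy
    have hmem : |f x - f y| / dist x y ∈
        ((fun p : Y × Y => |f p.1 - f p.2| / dist p.1 p.2) '' {p : Y × Y | p.1 ≠ p.2}) :=
      ⟨(x, y), hxy, rfl⟩
    have hbdd : BddAbove ((fun p : Y × Y => |f p.1 - f p.2| / dist p.1 p.2) ''
        {p : Y × Y | p.1 ≠ p.2}) := by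
      refine ⟨max K0 0, ?_⟩
      rintro r ⟨p, hp, rfl⟩
      have hd' : 0 < dist p.1 p.2 := dist_pos.mpr hp
      rw [div_le_iff₀ hd']
      calc |f p.1 - f p.2| ≤ K0 * dist p.1 p.2 := hb p.1 p.2
        _ ≤ max K0 0 * dist p.1 p.2 := by
            apply mul_le_mul_of_nonneg_right (le_max_left _ _) hd'.le
    have := le_csSup hbdd hmem
    rw [div_le_iff₀ hd] at this
    exact this

theorem lipConst_smul {f : Y → ℝ} {K0 : ℝ}
    (hb : ∀ x y, |f x - f y| ≤ K0 * dist x y) (c : ℝ) :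
    lipConst Y (c • f) = |c| * lipConst Y f := by
  rcases eq_or_ne c 0 with rfl | hc
  · simp only [zero_smul, abs_zero, zero_mul]
    refine le_antisymm (lipConst_le le_rfl ?_) (lipConst_nonneg _)
    intro x y
    simp
  · refine le_antisymm ?_ ?_
    · refine lipConst_le (mul_nonneg (abs_nonneg c) (lipConst_nonneg f)) ?_
      intro x y
      have : |(c • f) x - (c • f) y| = |c| * |f x - f y| := by
        simp [smul_eq_mul, ← abs_mul, mul_sub]
      rw [this, mul_assoc]
      exact mul_le_mul_of_nonneg_left (abs_sub_le_lipConst hb x y) (abs_nonneg c)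
    · have hcpos : (0:ℝ) < |c| := abs_pos.mpr hc
      rw [← le_div_iff₀' hcpos]
      refine lipConst_le (div_nonneg (lipConst_nonneg _) hcpos.le) ?_
      intro x y
      rw [div_mul_eq_mul_div, le_div_iff₀ hcpos, mul_comm _ |c|,
        ← abs_mul, mul_sub]
      have hb' : ∀ x y, |(c • f) x - (c • f) y| ≤ (|c| * |K0|) * dist x y := by
        intro x y
        have : |(c • f) x - (c • f) y| = |c| * |f x - f y| := by
          simp [smul_eq_mul, ← abs_mul, mul_sub]
        rw [this, mul_assoc]
        refine mul_le_mul_of_nonneg_left ((hb x y).trans ?_) (abs_nonneg c)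
        exact mul_le_mul_of_nonneg_right (le_abs_self K0) dist_nonneg
      have := abs_sub_le_lipConst hb' x y
      simpa [smul_eq_mul, mul_sub] using this

end LipConstLemmas

section OUSLemmas
open scoped Topology

namespace OrderUnitSpace

variable (A : OrderUnitSpace)

theorem sub_nonneg_of_le {a b : A.carrier} (h : a ≤ b) : 0 ≤ b - a := by
  have := A.add_le_add_left' a b h (-a)
  rwa [neg_add_cancel, neg_add_eq_sub] at this

theorem state_map_smul_e (μ : A.State) (t : ℝ) : μ.1 (t • A.e) = t := by
  rw [map_smul, μ.2.1, smul_eq_mul, mul_one]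

theorem state_abs_le (μ : A.State) {a : A.carrier} {M : ℝ}
    (h1 : -(M • A.e) ≤ a) (h2 : a ≤ M • A.e) : |μ.1 a| ≤ M := by
  have k1 : 0 ≤ μ.1 (M • A.e - a) := μ.2.2 _ (A.sub_nonneg_of_le h2)
  have k2 : 0 ≤ μ.1 (a - -(M • A.e)) := μ.2.2 _ (A.sub_nonneg_of_le h1)
  rw [map_sub, A.state_map_smul_e] at k1
  rw [map_sub, map_neg, A.state_map_smul_e] at k2
  rw [abs_le]
  constructor <;> linarith

theorem rho_self (L : Seminorm ℝ A.carrier) (μ : A.State) : A.rho L μ μ = 0 := by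
  simp [rho]

theorem ofReal_abs_le_rho (L : Seminorm ℝ A.carrier) {a : A.carrier} (ha : L a ≤ 1)
    (μ ν : A.State) : ENNReal.ofReal |μ.1 a - ν.1 a| ≤ A.rho L μ ν :=
  le_iSup (fun a : {a : A.carrier // L a ≤ 1} => ENNReal.ofReal |μ.1 a.1 - ν.1 a.1|) ⟨a, ha⟩

theorem rho_le_ofReal {L : Seminorm ℝ A.carrier} {μ ν : A.State} {r : ℝ}
    (h : ∀ a : A.carrier, L a ≤ 1 → |μ.1 a - ν.1 a| ≤ r) :
    A.rho L μ ν ≤ ENNReal.ofReal r := by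
  refine iSup_le ?_
  rintro ⟨a, ha⟩
  exact ENNReal.ofReal_le_ofReal (h a ha)

theorem rho_triangle (L : Seminorm ℝ A.carrier) (μ κ ν : A.State) :
    A.rho L μ ν ≤ A.rho L μ κ + A.rho L κ ν := by
  refine iSup_le ?_
  rintro ⟨a, ha⟩
  calc ENNReal.ofReal |μ.1 a - ν.1 a|
      ≤ ENNReal.ofReal (|μ.1 a - κ.1 a| + |κ.1 a - ν.1 a|) :=
        ENNReal.ofReal_le_ofReal (abs_sub_le _ _ _)
    _ ≤ ENNReal.ofReal |μ.1 a - κ.1 a| + ENNReal.ofReal |κ.1 a - ν.1 a| :=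
        ENNReal.ofReal_add_le
    _ ≤ A.rho L μ κ + A.rho L κ ν :=
        add_le_add (A.ofReal_abs_le_rho L ha μ κ) (A.ofReal_abs_le_rho L ha κ ν)

end OrderUnitSpace

/-- A set all whose points have a generator ball around them inside the set
is open in the ball topology. -/
theorem ballTopology_isOpen {S : Type*} {ρ : S → S → ℝ≥0∞} {U : Set S}
    (h : ∀ s ∈ U, ∃ (μ : S) (ε : ℝ≥0∞), 0 < ε ∧ s ∈ {ν | ρ μ ν < ε} ∧ {ν | ρ μ ν < ε} ⊆ U) :
    (ballTopology ρ).IsOpen U := by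
  have : U = ⋃₀ {B | (∃ (μ : S) (ε : ℝ≥0∞), 0 < ε ∧ B = {ν | ρ μ ν < ε}) ∧ B ⊆ U} := by
    ext s
    constructor
    · intro hs
      obtain ⟨μ, ε, hε, hmem, hsub⟩ := h s hs
      exact ⟨_, ⟨⟨μ, ε, hε, rfl⟩, hsub⟩, hmem⟩
    · rintro ⟨B, ⟨-, hBU⟩, hsB⟩
      exact hBU hsB
  rw [this]
  letI := ballTopology ρ
  apply isOpen_sUnion
  rintro B ⟨⟨μ, ε, hε, rfl⟩, -⟩
  exact TopologicalSpace.isOpen_generateFrom_of_mem ⟨μ, ε, hε, rfl⟩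

/-- Evaluation at `a` is continuous for the ball topology of `ρ_L`. -/
theorem OrderUnitSpace.continuous_eval_ballTopology (A : OrderUnitSpace)
    (L : Seminorm ℝ A.carrier) (hL : A.IsLipschitz L) (a : A.carrier) :
    Continuous[ballTopology (A.rho L), inferInstance] (fun ν : A.State => ν.1 a) := by
  rcases le_or_gt (L a) 0 with h0 | hpos
  · -- `a` is a multiple of the order unit, so evaluation is constant.
    have h0 : L a = 0 := le_antisymm h0 (apply_nonneg L a)
    obtain ⟨t, rfl⟩ := (hL a).mp h0
    have : (fun ν : A.State => ν.1 (t • A.e)) = fun _ => t := by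
      funext ν
      exact A.state_map_smul_e ν t
    rw [this]
    exact @continuous_const _ _ (ballTopology (A.rho L)) _ _
  · rw [@continuous_def _ _ (ballTopology (A.rho L)) _]
    intro s hs
    apply ballTopology_isOpen
    intro ν₀ hν₀
    obtain ⟨ε, hε, hball⟩ := Metric.isOpen_iff.mp hs _ hν₀
    refine ⟨ν₀, ENNReal.ofReal (ε / L a), ENNReal.ofReal_pos.mpr (div_pos hε hpos),
      by simpa [A.rho_self] using div_pos hε hpos, ?_⟩
    intro ν hν
    apply hball
    simp only [Set.mem_setOf_eq] at hν
    set a' : A.carrier := (L a)⁻¹ • a with ha'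
    have hLa' : L a' ≤ 1 := by
      rw [ha', map_smul_eq_mul, Real.norm_eq_abs, abs_of_nonneg (inv_nonneg.mpr hpos.le),
        inv_mul_cancel₀ hpos.ne']
    have h1 : ENNReal.ofReal |ν₀.1 a' - ν.1 a'| < ENNReal.ofReal (ε / L a) :=
      lt_of_le_of_lt (A.ofReal_abs_le_rho L hLa' ν₀ ν) hν
    have h2 : |ν₀.1 a' - ν.1 a'| < ε / L a := by
      by_contra hcon
      push_neg at hcon
      exact absurd (lt_of_le_of_lt (ENNReal.ofReal_le_ofReal hcon) h1) (lt_irrefl _)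
    have ha : a = L a • a' := by
      rw [ha', smul_smul, mul_inv_cancel₀ hpos.ne', one_smul]
    have : ν.1 a - ν₀.1 a = L a * (ν.1 a' - ν₀.1 a') := by
      rw [mul_sub]
      conv_lhs => rw [ha]
      simp [map_smul]
    rw [Metric.mem_ball, Real.dist_eq, this, abs_mul, abs_of_nonneg hpos.le, abs_sub_comm]
    calc L a * |ν₀.1 a' - ν.1 a'| < L a * (ε / L a) :=
          (mul_lt_mul_iff_right₀ hpos).mpr h2
      _ = ε := by field_simp

/-- The ball topology of `ρ_L` is finer than the weak-* topology. -/
theorem OrderUnitSpace.ballTopology_le_weak (A : OrderUnitSpace)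
    (L : Seminorm ℝ A.carrier) (hL : A.IsLipschitz L) :
    ballTopology (A.rho L) ≤ (inferInstance : TopologicalSpace A.State) := by
  show ballTopology (A.rho L) ≤ TopologicalSpace.induced _ _
  rw [← continuous_iff_le_induced]
  exact @continuous_pi _ _ _ (ballTopology (A.rho L)) _ _
    (fun a => A.continuous_eval_ballTopology L hL a)

end OUSLemmas

section SumMetric

variable {X Y Z : Type} [MetricSpace X] [MetricSpace Y] [MetricSpace Z]

/-- Distance on the disjoint union: within each piece the original distance,
across the pieces the distance of the images in `Z` plus `δ`. -/
noncomputable def sumDist (p : X → Z) (q : Y → Z) (δ : ℝ) : X ⊕ Y → X ⊕ Y → ℝ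
  | Sum.inl x, Sum.inl x' => dist x x'
  | Sum.inl x, Sum.inr y => dist (p x) (q y) + δ
  | Sum.inr y, Sum.inl x => dist (p x) (q y) + δ
  | Sum.inr y, Sum.inr y' => dist y y'

/-- The disjoint union as a metric space. -/
noncomputable def sumMet (p : X → Z) (q : Y → Z) (δ : ℝ)
    (hp : Isometry p) (hq : Isometry q) (hδ : 0 < δ) : MetricSpace (X ⊕ Y) where
  dist := sumDist p q δ
  dist_self z := by cases z <;> simp [sumDist]
  dist_comm z w := by cases z <;> cases w <;> simp [sumDist, dist_comm]
  dist_triangle z w v := by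
    have hpd : ∀ a b : X, dist (p a) (p b) = dist a b := fun a b => hp.dist_eq a b
    have hqd : ∀ a b : Y, dist (q a) (q b) = dist a b := fun a b => hq.dist_eq a b
    cases z with
    | inl x => cases w with
      | inl x' => cases v with
        | inl x'' => exact dist_triangle x x' x''
        | inr y => show dist (p x) (q y) + δ ≤ dist x x' + (dist (p x') (q y) + δ)
                   have := dist_triangle (p x) (p x') (q y)
                   rw [hpd] at this; linarith
      | inr y => cases v with
        | inl x' => show dist x x' ≤ (dist (p x) (q y) + δ) + (dist (p x') (q y) + δ)
                    have h1 := dist_triangle (p x) (q y) (p x')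
                    rw [dist_comm (q y) (p x')] at h1
                    have h2 : dist (p x) (p x') = dist x x' := hpd x x'
                    linarith
        | inr y' => show dist (p x) (q y') + δ ≤ (dist (p x) (q y) + δ) + dist y y'
                    have := dist_triangle (p x) (q y) (q y')
                    rw [hqd] at this; linarith
    | inr y => cases w with
      | inl x => cases v with
        | inl x' => show dist (p x') (q y) + δ ≤ (dist (p x) (q y) + δ) + dist x x'
                    have := dist_triangle (p x') (p x) (q y)
                    rw [hpd, dist_comm x' x] at this; linarith
        | inr y' => show dist y y' ≤ (dist (p x) (q y) + δ) + (dist (p x) (q y') + δ)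
                    have h1 := dist_triangle (q y) (p x) (q y')
                    rw [dist_comm (q y) (p x)] at h1
                    have h2 : dist (q y) (q y') = dist y y' := hqd y y'
                    linarith
      | inr y' => cases v with
        | inl x => show dist (p x) (q y) + δ ≤ dist y y' + (dist (p x) (q y') + δ)
                   have h1 := dist_triangle (p x) (q y') (q y)
                   have h2 : dist (q y') (q y) = dist y y' := by rw [hqd, dist_comm]
                   linarith
        | inr y'' => exact dist_triangle y y' y''
  eq_of_dist_eq_zero := by
    intro z w h
    cases z with
    | inl x => cases w with
      | inl x' => exact congrArg Sum.inl (dist_eq_zero.mp h)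
      | inr y => exact absurd h (by
          show dist (p x) (q y) + δ ≠ 0
          have := dist_nonneg (x := p x) (y := q y); intro hc; linarith)
    | inr y => cases w with
      | inl x => exact absurd h (by
          show dist (p x) (q y) + δ ≠ 0
          have := dist_nonneg (x := p x) (y := q y); intro hc; linarith)
      | inr y' => exact congrArg Sum.inr (dist_eq_zero.mp h)

end SumMetric

section McShane

/-- McShane's extension theorem: a function satisfying a Lipschitz bound on a
nonempty subset extends to the whole space with the same bound. -/
theorem mcshane_ext {W : Type} [MetricSpace W] (f : W → ℝ) {K : ℝ} (hK : 0 ≤ K)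
    (s : Set W) (hs : s.Nonempty)
    (hf : ∀ x ∈ s, ∀ y ∈ s, |f x - f y| ≤ K * dist x y) :
    ∃ h : W → ℝ, (∀ x ∈ s, h x = f x) ∧ ∀ z w, |h z - h w| ≤ K * dist z w := by
  obtain ⟨x₀, hx₀⟩ := hs
  set g : W → ℝ := fun z => sInf ((fun x => f x + K * dist x z) '' s) with hg
  have hne : ∀ z : W, ((fun x => f x + K * dist x z) '' s).Nonempty :=
    fun z => ⟨_, ⟨x₀, hx₀, rfl⟩⟩
  have hbdd : ∀ z : W, BddBelow ((fun x => f x + K * dist x z) '' s) := by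
    intro z
    refine ⟨f x₀ - K * dist x₀ z, ?_⟩
    rintro r ⟨x, hx, rfl⟩
    show f x₀ - K * dist x₀ z ≤ f x + K * dist x z
    have h1 : |f x₀ - f x| ≤ K * dist x₀ x := hf x₀ hx₀ x hx
    have h2 : K * dist x₀ x ≤ K * dist x₀ z + K * dist x z := by
      rw [← mul_add]
      refine mul_le_mul_of_nonneg_left ?_ hK
      calc dist x₀ x ≤ dist x₀ z + dist z x := dist_triangle x₀ z x
        _ = dist x₀ z + dist x z := by rw [dist_comm z x]
    have h3 : f x₀ - f x ≤ K * dist x₀ x := (abs_le.mp h1).2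
    linarith
  have hlip : ∀ z w : W, g z ≤ g w + K * dist z w := by
    intro z w
    have key : g z - K * dist z w ≤ g w := by
      refine le_csInf (hne w) ?_
      rintro r ⟨x, hx, rfl⟩
      show g z - K * dist z w ≤ f x + K * dist x w
      have h1 : g z ≤ f x + K * dist x z := csInf_le (hbdd z) ⟨x, hx, rfl⟩
      have h2 : K * dist x z ≤ K * dist x w + K * dist z w := by
        rw [← mul_add]
        refine mul_le_mul_of_nonneg_left ?_ hK
        calc dist x z ≤ dist x w + dist w z := dist_triangle x w z
          _ = dist x w + dist z w := by rw [dist_comm w z]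
      linarith
    linarith
  refine ⟨g, ?_, ?_⟩
  · intro x hx
    refine le_antisymm ?_ (le_csInf (hne x) ?_)
    · have := csInf_le (hbdd x) (⟨x, hx, rfl⟩ :
        f x + K * dist x x ∈ (fun y => f y + K * dist y x) '' s)
      simpa using this
    · rintro r ⟨x', hx', rfl⟩
      show f x ≤ f x' + K * dist x' x
      have h1 : |f x' - f x| ≤ K * dist x' x := hf x' hx' x hx
      have h2 : f x - f x' ≤ K * dist x' x := by
        have := (abs_le.mp h1).1
        linarith
      linarith
  · intro z w
    rw [abs_sub_le_iff]
    constructor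
    · have := hlip z w
      linarith
    · have := hlip w z
      rw [dist_comm w z] at this
      linarith

end McShane

section LipBounds

variable {X : Type} [MetricSpace X] [CompactSpace X] [Nonempty X]

theorem lip_abs_bound (f : ↥(lipSubmodule X)) : ∃ M : ℝ, 0 ≤ M ∧ ∀ x, |f.1 x| ≤ M := by
  obtain ⟨K, hK⟩ := f.2
  obtain ⟨x₀, -, hx₀⟩ := isCompact_univ.exists_isMaxOn Set.univ_nonempty
    (continuous_abs.comp hK.continuous).continuousOn
  exact ⟨|f.1 x₀|, abs_nonneg _, fun x => isMaxOn_iff.mp hx₀ x (Set.mem_univ x)⟩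

omit [CompactSpace X] [Nonempty X] in
theorem lip_dist_bound (f : ↥(lipSubmodule X)) :
    ∃ K : ℝ, 0 ≤ K ∧ ∀ x x', |f.1 x - f.1 x'| ≤ K * dist x x' := by
  obtain ⟨K, hK⟩ := f.2
  refine ⟨K, K.coe_nonneg, fun x x' => ?_⟩
  have := hK.dist_le_mul x x'
  rwa [Real.dist_eq] at this

end LipBounds

section Bridge

variable (X₁ X₂ : Type) [MetricSpace X₁] [CompactSpace X₁] [Nonempty X₁]
  [MetricSpace X₂] [CompactSpace X₂] [Nonempty X₂]

/-- The function on the disjoint union determined by a pair of Lipschitz functions. -/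
def bridgeFun (a : ((lipOUS X₁).prod (lipOUS X₂)).carrier) : X₁ ⊕ X₂ → ℝ :=
  Sum.elim a.1.1 a.2.1

theorem bridgeFun_add (a b : ((lipOUS X₁).prod (lipOUS X₂)).carrier) :
    bridgeFun X₁ X₂ (a + b) = bridgeFun X₁ X₂ a + bridgeFun X₁ X₂ b := by
  funext z
  cases z <;> simp [bridgeFun]

theorem bridgeFun_smul (c : ℝ) (a : ((lipOUS X₁).prod (lipOUS X₂)).carrier) :
    bridgeFun X₁ X₂ (c • a) = c • bridgeFun X₁ X₂ a := by
  funext z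
  cases z <;> simp [bridgeFun]

theorem bridgeFun_neg (a : ((lipOUS X₁).prod (lipOUS X₂)).carrier) :
    bridgeFun X₁ X₂ (-a) = -bridgeFun X₁ X₂ a := by
  funext z
  cases z <;> simp [bridgeFun]

theorem bridgeFun_zero : bridgeFun X₁ X₂ 0 = 0 := by
  funext z
  cases z <;> simp [bridgeFun]

theorem bridgeFun_sub (a b : ((lipOUS X₁).prod (lipOUS X₂)).carrier) :
    bridgeFun X₁ X₂ (a - b) = bridgeFun X₁ X₂ a - bridgeFun X₁ X₂ b := by
  funext z
  cases z <;> simp [bridgeFun]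

theorem bridgeFun_smul_e (t : ℝ) :
    bridgeFun X₁ X₂ (t • ((lipOUS X₁).prod (lipOUS X₂)).e) = fun _ => t := by
  funext z
  cases z <;> simp [bridgeFun, OrderUnitSpace.prod, lipOUS]

variable {Z : Type} [MetricSpace Z] (p : X₁ → Z) (q : X₂ → Z) {δ : ℝ}
  (hp : Isometry p) (hq : Isometry q) (hδ : 0 < δ)

include hδ in
theorem bridgeFun_bound (a : ((lipOUS X₁).prod (lipOUS X₂)).carrier) :
    ∃ K : ℝ, 0 ≤ K ∧ ∀ z w, |bridgeFun X₁ X₂ a z - bridgeFun X₁ X₂ a w| ≤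
      K * sumDist p q δ z w := by
  obtain ⟨K₁, hK₁0, hK₁⟩ := lip_dist_bound a.1
  obtain ⟨K₂, hK₂0, hK₂⟩ := lip_dist_bound a.2
  obtain ⟨M₁, hM₁0, hM₁⟩ := lip_abs_bound a.1
  obtain ⟨M₂, hM₂0, hM₂⟩ := lip_abs_bound a.2
  set K := max (max K₁ K₂) ((M₁ + M₂) / δ) with hKdef
  have hK0 : 0 ≤ K := le_trans hK₁0 ((le_max_left K₁ K₂).trans (le_max_left _ _))
  have hKcross : ∀ x y, |a.1.1 x - a.2.1 y| ≤ K * (dist (p x) (q y) + δ) := by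
    intro x y
    have h1 : |a.1.1 x - a.2.1 y| ≤ M₁ + M₂ := by
      calc |a.1.1 x - a.2.1 y| ≤ |a.1.1 x| + |a.2.1 y| := abs_sub _ _
        _ ≤ M₁ + M₂ := add_le_add (hM₁ x) (hM₂ y)
    have hle : (M₁ + M₂) / δ ≤ K := le_max_right _ _
    have h2 : M₁ + M₂ ≤ K * δ := (div_le_iff₀ hδ).mp hle
    have hd : δ ≤ dist (p x) (q y) + δ := by
      have := dist_nonneg (x := p x) (y := q y); linarith
    have h5 : K * δ ≤ K * (dist (p x) (q y) + δ) :=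
      mul_le_mul_of_nonneg_left hd hK0
    linarith
  refine ⟨K, hK0, ?_⟩
  intro z w
  cases z with
  | inl x => cases w with
    | inl x' =>
        show |a.1.1 x - a.1.1 x'| ≤ K * dist x x'
        refine (hK₁ x x').trans (mul_le_mul_of_nonneg_right ?_ dist_nonneg)
        exact (le_max_left K₁ K₂).trans (le_max_left _ _)
    | inr y => exact hKcross x y
  | inr y => cases w with
    | inl x =>
        show |a.2.1 y - a.1.1 x| ≤ K * (dist (p x) (q y) + δ)
        rw [abs_sub_comm]
        exact hKcross x y
    | inr y' =>
        show |a.2.1 y - a.2.1 y'| ≤ K * dist y y'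
        refine (hK₂ y y').trans (mul_le_mul_of_nonneg_right ?_ dist_nonneg)
        exact (le_max_right K₁ K₂).trans (le_max_left _ _)

/-- Rieffel's bridge seminorm on `Lip(X₁) ⊕ Lip(X₂)`: the Lipschitz constant of the
combined function on the disjoint union. -/
noncomputable def bridgeL : Seminorm ℝ (((lipOUS X₁).prod (lipOUS X₂)).carrier) :=
  letI := sumMet p q δ hp hq hδ
  { toFun := fun a => lipConst (X₁ ⊕ X₂) (bridgeFun X₁ X₂ a)
    map_zero' := by
      show lipConst (X₁ ⊕ X₂) (bridgeFun X₁ X₂ 0) = 0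
      rw [bridgeFun_zero]
      refine le_antisymm (lipConst_le le_rfl ?_) (lipConst_nonneg _)
      intro x y
      simp
    add_le' := by
      intro a b
      show lipConst (X₁ ⊕ X₂) (bridgeFun X₁ X₂ (a + b)) ≤
        lipConst (X₁ ⊕ X₂) (bridgeFun X₁ X₂ a) + lipConst (X₁ ⊕ X₂) (bridgeFun X₁ X₂ b)
      rw [bridgeFun_add]
      obtain ⟨Ka, hKa0, hKa⟩ := bridgeFun_bound X₁ X₂ p q hδ a
      obtain ⟨Kb, hKb0, hKb⟩ := bridgeFun_bound X₁ X₂ p q hδ b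
      refine lipConst_le (add_nonneg (lipConst_nonneg _) (lipConst_nonneg _)) ?_
      intro z w
      calc |(bridgeFun X₁ X₂ a + bridgeFun X₁ X₂ b) z -
            (bridgeFun X₁ X₂ a + bridgeFun X₁ X₂ b) w|
          ≤ |bridgeFun X₁ X₂ a z - bridgeFun X₁ X₂ a w| +
            |bridgeFun X₁ X₂ b z - bridgeFun X₁ X₂ b w| := by
            have : (bridgeFun X₁ X₂ a + bridgeFun X₁ X₂ b) z -
                (bridgeFun X₁ X₂ a + bridgeFun X₁ X₂ b) w =
                (bridgeFun X₁ X₂ a z - bridgeFun X₁ X₂ a w) +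
                (bridgeFun X₁ X₂ b z - bridgeFun X₁ X₂ b w) := by
              simp; ring
            rw [this]
            exact abs_add_le _ _
        _ ≤ lipConst (X₁ ⊕ X₂) (bridgeFun X₁ X₂ a) * dist z w +
            lipConst (X₁ ⊕ X₂) (bridgeFun X₁ X₂ b) * dist z w :=
            add_le_add (abs_sub_le_lipConst hKa z w) (abs_sub_le_lipConst hKb z w)
        _ = (lipConst (X₁ ⊕ X₂) (bridgeFun X₁ X₂ a) +
            lipConst (X₁ ⊕ X₂) (bridgeFun X₁ X₂ b)) * dist z w := by ring
    neg' := by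
      intro a
      show lipConst (X₁ ⊕ X₂) (bridgeFun X₁ X₂ (-a)) = lipConst (X₁ ⊕ X₂) (bridgeFun X₁ X₂ a)
      rw [bridgeFun_neg]
      have : -bridgeFun X₁ X₂ a = (-1 : ℝ) • bridgeFun X₁ X₂ a := by
        funext z; simp
      obtain ⟨Ka, hKa0, hKa⟩ := bridgeFun_bound X₁ X₂ p q hδ a
      rw [this, lipConst_smul hKa]
      simp
    smul' := by
      intro c a
      show lipConst (X₁ ⊕ X₂) (bridgeFun X₁ X₂ (c • a)) =
        ‖c‖ * lipConst (X₁ ⊕ X₂) (bridgeFun X₁ X₂ a)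
      rw [bridgeFun_smul]
      obtain ⟨Ka, hKa0, hKa⟩ := bridgeFun_bound X₁ X₂ p q hδ a
      rw [lipConst_smul hKa]
      simp [Real.norm_eq_abs] }

theorem bridgeL_lip (a : ((lipOUS X₁).prod (lipOUS X₂)).carrier) (z w : X₁ ⊕ X₂) :
    |bridgeFun X₁ X₂ a z - bridgeFun X₁ X₂ a w| ≤
      bridgeL X₁ X₂ p q hp hq hδ a * sumDist p q δ z w := by
  obtain ⟨Ka, hKa0, hKa⟩ := bridgeFun_bound X₁ X₂ p q hδ a
  letI := sumMet p q δ hp hq hδ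
  exact abs_sub_le_lipConst hKa z w

end Bridge

section BridgeProps

variable (X₁ X₂ : Type) [MetricSpace X₁] [CompactSpace X₁] [Nonempty X₁]
  [MetricSpace X₂] [CompactSpace X₂] [Nonempty X₂]
  {Z : Type} [MetricSpace Z] (p : X₁ → Z) (q : X₂ → Z) {δ : ℝ}
  (hp : Isometry p) (hq : Isometry q) (hδ : 0 < δ)

theorem bridgeFun_inj {a b : ((lipOUS X₁).prod (lipOUS X₂)).carrier}
    (h : bridgeFun X₁ X₂ a = bridgeFun X₁ X₂ b) : a = b := by
  have h1 : a.1 = b.1 := by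
    apply Subtype.ext
    funext x
    exact congrFun h (Sum.inl x)
  have h2 : a.2 = b.2 := by
    apply Subtype.ext
    funext y
    exact congrFun h (Sum.inr y)
  exact Prod.ext h1 h2

theorem bridgeL_smul_e (t : ℝ) :
    bridgeL X₁ X₂ p q hp hq hδ (t • ((lipOUS X₁).prod (lipOUS X₂)).e) = 0 := by
  letI := sumMet p q δ hp hq hδ
  show lipConst (X₁ ⊕ X₂) (bridgeFun X₁ X₂ (t • ((lipOUS X₁).prod (lipOUS X₂)).e)) = 0
  rw [bridgeFun_smul_e]
  refine le_antisymm (lipConst_le le_rfl ?_) (lipConst_nonneg _)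
  intro x y
  simp

theorem bridgeL_isLipschitz :
    ((lipOUS X₁).prod (lipOUS X₂)).IsLipschitz (bridgeL X₁ X₂ p q hp hq hδ) := by
  intro a
  constructor
  · intro h0
    obtain ⟨x₀⟩ := (inferInstance : Nonempty X₁)
    refine ⟨a.1.1 x₀, ?_⟩
    have hconst : ∀ z, bridgeFun X₁ X₂ a z = a.1.1 x₀ := by
      intro z
      have := bridgeL_lip X₁ X₂ p q hp hq hδ a z (Sum.inl x₀)
      rw [h0, zero_mul] at this
      have h1 : bridgeFun X₁ X₂ a z - bridgeFun X₁ X₂ a (Sum.inl x₀) = 0 :=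
        abs_eq_zero.mp (le_antisymm this (abs_nonneg _))
      have : bridgeFun X₁ X₂ a (Sum.inl x₀) = a.1.1 x₀ := rfl
      linarith [sub_eq_zero.mp h1, this]
    apply bridgeFun_inj
    rw [bridgeFun_smul_e]
    funext z
    exact hconst z
  · rintro ⟨t, rfl⟩
    exact bridgeL_smul_e X₁ X₂ p q hp hq hδ t

theorem bridgeL_induces_fst :
    Induces (Prod.fst : ((lipOUS X₁).prod (lipOUS X₂)).carrier → (lipOUS X₁).carrier)
      (fun a => bridgeL X₁ X₂ p q hp hq hδ a) (fun f => lipConst X₁ f.1) := by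
  intro f
  letI := sumMet p q δ hp hq hδ
  set K := lipConst X₁ f.1 with hKdef
  obtain ⟨K₀, hK₀0, hK₀⟩ := lip_dist_bound f
  have hK0 : 0 ≤ K := lipConst_nonneg _
  -- the McShane extension of `f` to the disjoint union
  have hside : ∀ x ∈ Set.range (Sum.inl : X₁ → X₁ ⊕ X₂), ∀ y ∈ Set.range Sum.inl,
      |Sum.elim f.1 (0 : X₂ → ℝ) x - Sum.elim f.1 (0 : X₂ → ℝ) y| ≤ K * dist x y := by
    rintro - ⟨x, rfl⟩ - ⟨x', rfl⟩
    show |f.1 x - f.1 x'| ≤ K * dist x x'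
    exact abs_sub_le_lipConst hK₀ x x'
  obtain ⟨h, hh1, hh2⟩ := mcshane_ext (W := X₁ ⊕ X₂) (Sum.elim f.1 (0 : X₂ → ℝ)) hK0
    (Set.range Sum.inl) (Set.range_nonempty _) hside
  · have hg2 : LipschitzWith K.toNNReal (h ∘ Sum.inr) := by
      apply LipschitzWith.of_dist_le_mul
      intro y y'
      rw [Real.dist_eq, Real.coe_toNNReal _ hK0]
      exact hh2 (Sum.inr y) (Sum.inr y')
    set gE : ↥(lipSubmodule X₂) := ⟨h ∘ Sum.inr, ⟨K.toNNReal, hg2⟩⟩ with hgE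
    have hpairfun : bridgeFun X₁ X₂ (f, gE) = h := by
      funext z
      cases z with
      | inl x =>
          have := hh1 (Sum.inl x) ⟨x, rfl⟩
          simpa [bridgeFun] using this.symm
      | inr y => rfl
    have hpair : bridgeL X₁ X₂ p q hp hq hδ (f, gE) ≤ K := by
      show lipConst (X₁ ⊕ X₂) (bridgeFun X₁ X₂ (f, gE)) ≤ K
      rw [hpairfun]
      exact lipConst_le hK0 hh2
    unfold quotientSeminorm
    refine le_antisymm (le_csInf ⟨_, ⟨(f, gE), rfl, rfl⟩⟩ ?_) ?_
    · rintro r ⟨a, ha1, rfl⟩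
      show lipConst X₁ f.1 ≤ bridgeL X₁ X₂ p q hp hq hδ a
      rw [← ha1]
      refine lipConst_le (apply_nonneg _ _) ?_
      intro x x'
      exact bridgeL_lip X₁ X₂ p q hp hq hδ a (Sum.inl x) (Sum.inl x')
    · refine le_trans (csInf_le ⟨0, ?_⟩ ⟨(f, gE), rfl, rfl⟩) hpair
      rintro r ⟨a, -, rfl⟩
      exact apply_nonneg _ _

theorem bridgeL_induces_snd :
    Induces (Prod.snd : ((lipOUS X₁).prod (lipOUS X₂)).carrier → (lipOUS X₂).carrier)
      (fun a => bridgeL X₁ X₂ p q hp hq hδ a) (fun g => lipConst X₂ g.1) := by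
  intro g
  letI := sumMet p q δ hp hq hδ
  set K := lipConst X₂ g.1 with hKdef
  obtain ⟨K₀, hK₀0, hK₀⟩ := lip_dist_bound g
  have hK0 : 0 ≤ K := lipConst_nonneg _
  have hside : ∀ x ∈ Set.range (Sum.inr : X₂ → X₁ ⊕ X₂), ∀ y ∈ Set.range Sum.inr,
      |Sum.elim (0 : X₁ → ℝ) g.1 x - Sum.elim (0 : X₁ → ℝ) g.1 y| ≤ K * dist x y := by
    rintro - ⟨y, rfl⟩ - ⟨y', rfl⟩
    show |g.1 y - g.1 y'| ≤ K * dist y y'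
    exact abs_sub_le_lipConst hK₀ y y'
  obtain ⟨h, hh1, hh2⟩ := mcshane_ext (W := X₁ ⊕ X₂) (Sum.elim (0 : X₁ → ℝ) g.1) hK0
    (Set.range Sum.inr) (Set.range_nonempty _) hside
  · have hf2 : LipschitzWith K.toNNReal (h ∘ Sum.inl) := by
      apply LipschitzWith.of_dist_le_mul
      intro x x'
      rw [Real.dist_eq, Real.coe_toNNReal _ hK0]
      exact hh2 (Sum.inl x) (Sum.inl x')
    set fE : ↥(lipSubmodule X₁) := ⟨h ∘ Sum.inl, ⟨K.toNNReal, hf2⟩⟩ with hfE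
    have hpairfun : bridgeFun X₁ X₂ (fE, g) = h := by
      funext z
      cases z with
      | inl x => rfl
      | inr y =>
          have := hh1 (Sum.inr y) ⟨y, rfl⟩
          simpa [bridgeFun] using this.symm
    have hpair : bridgeL X₁ X₂ p q hp hq hδ (fE, g) ≤ K := by
      show lipConst (X₁ ⊕ X₂) (bridgeFun X₁ X₂ (fE, g)) ≤ K
      rw [hpairfun]
      exact lipConst_le hK0 hh2
    unfold quotientSeminorm
    refine le_antisymm (le_csInf ⟨_, ⟨(fE, g), rfl, rfl⟩⟩ ?_) ?_
    · rintro r ⟨a, ha1, rfl⟩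
      show lipConst X₂ g.1 ≤ bridgeL X₁ X₂ p q hp hq hδ a
      rw [← ha1]
      refine lipConst_le (apply_nonneg _ _) ?_
      intro y y'
      exact bridgeL_lip X₁ X₂ p q hp hq hδ a (Sum.inr y) (Sum.inr y')
    · refine le_trans (csInf_le ⟨0, ?_⟩ ⟨(fE, g), rfl, rfl⟩) hpair
      rintro r ⟨a, -, rfl⟩
      exact apply_nonneg _ _

end BridgeProps

section Transfer

variable {X : Type} [MetricSpace X]

theorem lip_mul_bound {u v : X → ℝ} {Ku Kv Mu Mv : ℝ}
    (hMu0 : 0 ≤ Mu) (hMv0 : 0 ≤ Mv) (hKu0 : 0 ≤ Ku) (hKv0 : 0 ≤ Kv)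
    (hu : ∀ x x', |u x - u x'| ≤ Ku * dist x x') (hv : ∀ x x', |v x - v x'| ≤ Kv * dist x x')
    (hMu : ∀ x, |u x| ≤ Mu) (hMv : ∀ x, |v x| ≤ Mv) (x x' : X) :
    |u x * v x - u x' * v x'| ≤ (Mu * Kv + Mv * Ku) * dist x x' := by
  have h1 : u x * v x - u x' * v x' = u x * (v x - v x') + (u x - u x') * v x' := by ring
  calc |u x * v x - u x' * v x'|
      ≤ |u x * (v x - v x')| + |(u x - u x') * v x'| := by rw [h1]; exact abs_add_le _ _
    _ = |u x| * |v x - v x'| + |u x - u x'| * |v x'| := by rw [abs_mul, abs_mul]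
    _ ≤ Mu * (Kv * dist x x') + (Ku * dist x x') * Mv := by
        refine add_le_add (mul_le_mul (hMu x) (hv x x') (abs_nonneg _) hMu0) ?_
        exact mul_le_mul (hu x x') (hMv x') (abs_nonneg _) (by positivity)
    _ = (Mu * Kv + Mv * Ku) * dist x x' := by ring

theorem lip_inv_bound {S : X → ℝ} {m KS : ℝ} (hm : 0 < m) (hKS0 : 0 ≤ KS)
    (hlb : ∀ x, m ≤ S x) (hKS : ∀ x x', |S x - S x'| ≤ KS * dist x x') (x x' : X) :
    |(S x)⁻¹ - (S x')⁻¹| ≤ (KS / (m * m)) * dist x x' := by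
  have hx : 0 < S x := lt_of_lt_of_le hm (hlb x)
  have hx' : 0 < S x' := lt_of_lt_of_le hm (hlb x')
  rw [inv_sub_inv hx.ne' hx'.ne', abs_div, abs_mul,
    abs_of_pos hx, abs_of_pos hx']
  have h1 : |S x' - S x| ≤ KS * dist x x' := by
    rw [abs_sub_comm]; exact hKS x x'
  have h2 : m * m ≤ S x * S x' :=
    mul_le_mul (hlb x) (hlb x') hm.le hx.le
  calc |S x' - S x| / (S x * S x') ≤ (KS * dist x x') / (m * m) :=
        div_le_div₀ (by positivity) h1 (by positivity) h2
    _ = (KS / (m * m)) * dist x x' := by ring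

end Transfer

section StateTransfer

variable {X Y : Type} [MetricSpace X] [CompactSpace X] [Nonempty X]
  [MetricSpace Y] [CompactSpace Y] [Nonempty Y]

/-- Transfer of a state along a companion map `T`, using a Lipschitz partition of unity. -/
theorem state_transfer (μ : (lipOUS X).State) (T : X → Y) {r η : ℝ}
    (hr : 0 ≤ r) (hη : 0 < η) :
    ∃ ν : (lipOUS Y).State, ∀ (f : (lipOUS X).carrier) (g : (lipOUS Y).carrier),
      (∀ x x', |f.1 x - f.1 x'| ≤ dist x x') → (∀ x, |f.1 x - g.1 (T x)| ≤ r) →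
      |μ.1 f - ν.1 g| ≤ r + η := by
  classical
  -- a finite (η/4)-net
  obtain ⟨t, htfin, htcov⟩ := Metric.totallyBounded_iff.mp
    ((isCompact_univ : IsCompact (Set.univ : Set X)).totallyBounded) (η/4) (by positivity)
  set s : Finset X := htfin.toFinset with hsdef
  have hcov : ∀ x : X, ∃ i ∈ s, dist x i < η/4 := by
    intro x
    have hx := htcov (Set.mem_univ x)
    rw [Set.mem_iUnion₂] at hx
    obtain ⟨i, hi, hball⟩ := hx
    exact ⟨i, htfin.mem_toFinset.mpr hi, Metric.mem_ball.mp hball⟩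
  -- the bump functions
  set ψ : X → X → ℝ := fun i x => max (η/2 - dist x i) 0 with hψdef
  have hψ0 : ∀ i x, 0 ≤ ψ i x := fun i x => le_max_right _ _
  have hψub : ∀ i x, ψ i x ≤ η/2 := by
    intro i x
    refine max_le ?_ (by positivity)
    have := dist_nonneg (x := x) (y := i); linarith
  have hψlip : ∀ i x x', |ψ i x - ψ i x'| ≤ 1 * dist x x' := by
    intro i x x'
    rw [one_mul]
    calc |ψ i x - ψ i x'| ≤ |(η/2 - dist x i) - (η/2 - dist x' i)| :=
          abs_max_sub_max_le_abs _ _ _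
      _ = |dist x' i - dist x i| := by ring_nf
      _ ≤ dist x' x := abs_dist_sub_le x' x i
      _ = dist x x' := dist_comm x' x
  -- the normalizing sum
  set S : X → ℝ := fun x => ∑ i ∈ s, ψ i x with hSdef
  have hSlb : ∀ x, η/4 ≤ S x := by
    intro x
    obtain ⟨i, hi, hdi⟩ := hcov x
    have hψi : η/4 ≤ ψ i x := le_max_of_le_left (by linarith)
    calc η/4 ≤ ψ i x := hψi
      _ ≤ S x := Finset.single_le_sum (fun j _ => hψ0 j x) hi
  have hSpos : ∀ x, 0 < S x := fun x => lt_of_lt_of_le (by positivity) (hSlb x)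
  have hSlip : ∀ x x', |S x - S x'| ≤ (s.card : ℝ) * dist x x' := by
    intro x x'
    have h1 : S x - S x' = ∑ i ∈ s, (ψ i x - ψ i x') := by
      rw [hSdef]; exact (Finset.sum_sub_distrib _ _).symm
    rw [h1]
    calc |∑ i ∈ s, (ψ i x - ψ i x')| ≤ ∑ i ∈ s, |ψ i x - ψ i x'| :=
          Finset.abs_sum_le_sum_abs _ _
      _ ≤ ∑ _i ∈ s, dist x x' := by
          refine Finset.sum_le_sum ?_
          intro i _
          have := hψlip i x x'; linarith
      _ = (s.card : ℝ) * dist x x' := by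
          rw [Finset.sum_const, nsmul_eq_mul]
  -- the partition of unity
  have hm : (0:ℝ) < η/4 := by positivity
  set Kv : ℝ := (s.card : ℝ) / ((η/4) * (η/4)) with hKvdef
  have hKv0 : 0 ≤ Kv := by positivity
  set Kφ : ℝ := (η/2) * Kv + (4/η) * 1 with hKφdef
  have hKφ0 : 0 ≤ Kφ := by positivity
  have hinvub : ∀ x, |(S x)⁻¹| ≤ 4/η := by
    intro x
    rw [abs_of_pos (inv_pos.mpr (hSpos x))]
    calc (S x)⁻¹ ≤ (η/4)⁻¹ := inv_anti₀ hm (hSlb x)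
      _ = 4/η := by rw [inv_div]
  set φ : X → X → ℝ := fun i x => ψ i x * (S x)⁻¹ with hφdef
  have hφ0 : ∀ i x, 0 ≤ φ i x := fun i x =>
    mul_nonneg (hψ0 i x) (inv_pos.mpr (hSpos x)).le
  have hφlip : ∀ i x x', |φ i x - φ i x'| ≤ Kφ * dist x x' := by
    intro i x x'
    refine lip_mul_bound (by positivity) (by positivity) zero_le_one hKv0
      (hψlip i) ?_ (fun z => by rw [abs_of_nonneg (hψ0 i z)]; exact hψub i z) hinvub x x'
    exact lip_inv_bound hm (Nat.cast_nonneg _) hSlb hSlip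
  have hφsum : ∀ x, ∑ i ∈ s, φ i x = 1 := by
    intro x
    rw [hφdef]
    simp only []
    rw [← Finset.sum_mul]
    exact mul_inv_cancel₀ (hSpos x).ne'
  set Φ : X → ↥(lipSubmodule X) := fun i =>
    ⟨φ i, ⟨Kφ.toNNReal, by
      apply LipschitzWith.of_dist_le_mul
      intro x x'
      rw [Real.dist_eq, Real.coe_toNNReal _ hKφ0]
      exact hφlip i x x'⟩⟩ with hΦdef
  have hΦcoe : ∀ i, (Φ i).1 = φ i := fun i => rfl
  have hμΦ0 : ∀ i, 0 ≤ μ.1 (Φ i) := by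
    intro i
    refine μ.2.2 _ ?_
    rw [← Subtype.coe_le_coe]
    intro x
    simpa using hφ0 i x
  have hΦsum : (∑ i ∈ s, Φ i) = (lipOUS X).e := by
    apply Subtype.ext
    rw [AddSubmonoidClass.coe_finset_sum]
    funext x
    rw [Finset.sum_apply]
    exact hφsum x
  -- the transferred state
  set νl : (lipOUS Y).carrier →ₗ[ℝ] ℝ :=
    { toFun := fun g => ∑ i ∈ s, μ.1 (Φ i) * g.1 (T i)
      map_add' := by
        intro g g'
        simp only [Submodule.coe_add, Pi.add_apply, mul_add]
        exact Finset.sum_add_distrib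
      map_smul' := by
        intro c g
        simp only [Submodule.coe_smul, Pi.smul_apply, smul_eq_mul, RingHom.id_apply,
          Finset.mul_sum]
        exact Finset.sum_congr rfl (fun i _ => by ring) } with hνldef
  have hνstate : (lipOUS Y).IsState νl := by
    constructor
    · show (∑ i ∈ s, μ.1 (Φ i) * ((lipOUS Y).e).1 (T i)) = 1
      have he : ∀ i, ((lipOUS Y).e).1 (T i) = 1 := fun i => rfl
      calc ∑ i ∈ s, μ.1 (Φ i) * ((lipOUS Y).e).1 (T i)
          = ∑ i ∈ s, μ.1 (Φ i) := by
            refine Finset.sum_congr rfl (fun i _ => ?_)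
            rw [he i, mul_one]
        _ = μ.1 (∑ i ∈ s, Φ i) := (map_sum μ.1 Φ s).symm
        _ = 1 := by rw [hΦsum]; exact μ.2.1
    · intro g hg
      have hg' : ∀ y, 0 ≤ g.1 y := by
        rw [← Subtype.coe_le_coe] at hg
        intro y
        simpa using hg y
      exact Finset.sum_nonneg (fun i _ => mul_nonneg (hμΦ0 i) (hg' (T i)))
  refine ⟨⟨νl, hνstate⟩, ?_⟩
  intro f g hf hfg
  -- the comparison function
  set G : ↥(lipSubmodule X) := ∑ i ∈ s, g.1 (T i) • Φ i with hGdef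
  have hGcoe : ∀ x, G.1 x = ∑ i ∈ s, g.1 (T i) * φ i x := by
    intro x
    rw [hGdef]
    rw [show ((∑ i ∈ s, g.1 (T i) • Φ i : ↥(lipSubmodule X)) : X → ℝ)
      = ∑ i ∈ s, g.1 (T i) • φ i by
        rw [AddSubmonoidClass.coe_finset_sum]
        exact Finset.sum_congr rfl (fun i _ => rfl)]
    rw [Finset.sum_apply]
    exact Finset.sum_congr rfl (fun i _ => rfl)
  have hμG : μ.1 G = νl g := by
    rw [hGdef, map_sum]
    show ∑ i ∈ s, μ.1 (g.1 (T i) • Φ i) = ∑ i ∈ s, μ.1 (Φ i) * g.1 (T i)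
    refine Finset.sum_congr rfl (fun i _ => ?_)
    rw [map_smul, smul_eq_mul, mul_comm]
  have hpt : ∀ x, |f.1 x - G.1 x| ≤ r + η := by
    intro x
    have h1 : f.1 x - G.1 x = ∑ i ∈ s, φ i x * (f.1 x - g.1 (T i)) := by
      rw [hGcoe]
      calc f.1 x - ∑ i ∈ s, g.1 (T i) * φ i x
          = (∑ i ∈ s, φ i x * f.1 x) - ∑ i ∈ s, g.1 (T i) * φ i x := by
            rw [← Finset.sum_mul, hφsum x, one_mul]
        _ = ∑ i ∈ s, (φ i x * f.1 x - g.1 (T i) * φ i x) := (Finset.sum_sub_distrib _ _).symm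
        _ = ∑ i ∈ s, φ i x * (f.1 x - g.1 (T i)) :=
            Finset.sum_congr rfl (fun i _ => by ring)
    rw [h1]
    have hterm : ∀ i ∈ s, |φ i x * (f.1 x - g.1 (T i))| ≤ φ i x * (r + η) := by
      intro i _
      rw [abs_mul, abs_of_nonneg (hφ0 i x)]
      rcases eq_or_lt_of_le (hφ0 i x) with h0 | hpos
      · rw [← h0, zero_mul, zero_mul]
      · have hψpos : 0 < ψ i x := by
          by_contra hc
          push_neg at hc
          have : ψ i x = 0 := le_antisymm hc (hψ0 i x)
          rw [hφdef] at hpos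
          simp only [] at hpos
          rw [this, zero_mul] at hpos
          exact lt_irrefl _ hpos
        have hdist : dist x i < η/2 := by
          by_contra hc
          push_neg at hc
          have : η/2 - dist x i ≤ 0 := by linarith
          have : ψ i x = 0 := max_eq_right this
          rw [this] at hψpos
          exact lt_irrefl _ hψpos
        have habs : |f.1 x - g.1 (T i)| ≤ r + η := by
          calc |f.1 x - g.1 (T i)| ≤ |f.1 x - f.1 i| + |f.1 i - g.1 (T i)| :=
                abs_sub_le _ _ _
            _ ≤ dist x i + r := add_le_add (hf x i) (hfg i)
            _ ≤ r + η := by linarith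
        exact mul_le_mul_of_nonneg_left habs (hφ0 i x)
    calc |∑ i ∈ s, φ i x * (f.1 x - g.1 (T i))|
        ≤ ∑ i ∈ s, |φ i x * (f.1 x - g.1 (T i))| := Finset.abs_sum_le_sum_abs _ _
      _ ≤ ∑ i ∈ s, φ i x * (r + η) := Finset.sum_le_sum hterm
      _ = (∑ i ∈ s, φ i x) * (r + η) := (Finset.sum_mul _ _ _).symm
      _ = r + η := by rw [hφsum x, one_mul]
  -- conclude via the order-unit bound
  have hub : f - G ≤ (r + η) • (lipOUS X).e := by
    rw [← Subtype.coe_le_coe]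
    intro x
    have := (abs_le.mp (hpt x)).2
    simpa [Submodule.coe_smul, Pi.smul_apply, smul_eq_mul] using this
  have hlb2 : -((r + η) • (lipOUS X).e) ≤ f - G := by
    rw [← Subtype.coe_le_coe]
    intro x
    have := (abs_le.mp (hpt x)).1
    simpa [Submodule.coe_smul, Pi.smul_apply, smul_eq_mul] using this
  have hfin := (lipOUS X).state_abs_le μ hlb2 hub
  rw [map_sub, hμG] at hfin
  calc |μ.1 f - νl g| ≤ r + η := hfin

end StateTransfer

section BridgeNet

variable (X₁ X₂ : Type) [MetricSpace X₁] [CompactSpace X₁] [Nonempty X₁]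
  [MetricSpace X₂] [CompactSpace X₂] [Nonempty X₂]
  {Z : Type} [MetricSpace Z] (p : X₁ → Z) (q : X₂ → Z) {δ : ℝ}
  (hp : Isometry p) (hq : Isometry q) (hδ : 0 < δ)

/-- The normalized unit ball of the bridge seminorm is totally bounded in sup norm. -/
theorem bridge_net (x₀ : X₁) {η : ℝ} (hη : 0 < η) :
    ∃ F : Set (((lipOUS X₁).prod (lipOUS X₂)).carrier), F.Finite ∧
      ∀ a, bridgeL X₁ X₂ p q hp hq hδ a ≤ 1 → bridgeFun X₁ X₂ a (Sum.inl x₀) = 0 →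
        ∃ b ∈ F, ∀ z, |bridgeFun X₁ X₂ a z - bridgeFun X₁ X₂ b z| ≤ η := by
  classical
  letI : MetricSpace (X₁ ⊕ X₂) := sumMet p q δ hp hq hδ
  -- a bound on the diameter of the sum space as seen from `inl x₀`
  obtain ⟨C₁, hC₁⟩ := Metric.isBounded_iff.mp
    ((isCompact_univ : IsCompact (Set.univ : Set X₁)).isBounded)
  obtain ⟨CZ, hCZ⟩ := Metric.isBounded_iff.mp
    (((isCompact_range (hp.continuous)).union (isCompact_range (hq.continuous))).isBounded)
  set R : ℝ := max C₁ (CZ + δ) with hRdef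
  have hR : ∀ z : X₁ ⊕ X₂, dist z (Sum.inl x₀) ≤ R := by
    intro z
    cases z with
    | inl x =>
        refine le_trans ?_ (le_max_left _ _)
        exact hC₁ (Set.mem_univ x) (Set.mem_univ x₀)
    | inr y =>
        refine le_trans ?_ (le_max_right _ _)
        show dist (p x₀) (q y) + δ ≤ CZ + δ
        have : dist (p x₀) (q y) ≤ CZ :=
          hCZ (Set.mem_union_left _ ⟨x₀, rfl⟩) (Set.mem_union_right _ ⟨y, rfl⟩)
        linarith
  have hR0 : 0 ≤ R := le_trans dist_nonneg (hR (Sum.inl x₀))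
  -- finite nets in the two pieces
  obtain ⟨t₁, ht₁fin, ht₁cov⟩ := Metric.totallyBounded_iff.mp
    ((isCompact_univ : IsCompact (Set.univ : Set X₁)).totallyBounded) (η/4) (by positivity)
  obtain ⟨t₂, ht₂fin, ht₂cov⟩ := Metric.totallyBounded_iff.mp
    ((isCompact_univ : IsCompact (Set.univ : Set X₂)).totallyBounded) (η/4) (by positivity)
  set N : Finset (X₁ ⊕ X₂) :=
    (ht₁fin.toFinset.image Sum.inl) ∪ (ht₂fin.toFinset.image Sum.inr) with hNdef
  have hNcov : ∀ z : X₁ ⊕ X₂, ∃ n ∈ N, dist z n < η/4 := by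
    intro z
    cases z with
    | inl x =>
        have hx := ht₁cov (Set.mem_univ x)
        rw [Set.mem_iUnion₂] at hx
        obtain ⟨i, hi, hball⟩ := hx
        refine ⟨Sum.inl i, ?_, ?_⟩
        · exact Finset.mem_union_left _ (Finset.mem_image_of_mem _ (ht₁fin.mem_toFinset.mpr hi))
        · exact Metric.mem_ball.mp hball
    | inr y =>
        have hy := ht₂cov (Set.mem_univ y)
        rw [Set.mem_iUnion₂] at hy
        obtain ⟨i, hi, hball⟩ := hy
        refine ⟨Sum.inr i, ?_, ?_⟩
        · exact Finset.mem_union_right _ (Finset.mem_image_of_mem _ (ht₂fin.mem_toFinset.mpr hi))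
        · exact Metric.mem_ball.mp hball
  have hNne : N.Nonempty := by
    obtain ⟨n, hn, -⟩ := hNcov (Sum.inl x₀)
    exact ⟨n, hn⟩
  have hNatt : N.attach.Nonempty := Finset.attach_nonempty_iff.mpr hNne
  -- a finite grid of values
  obtain ⟨tG, htGfin, htGcov⟩ := Metric.totallyBounded_iff.mp
    (totallyBounded_Icc (-R) R) (η/4) (by positivity)
  have hgrid : ∀ v : ℝ, |v| ≤ R → ∃ gg ∈ tG, |v - gg| < η/4 := by
    intro v hv
    have hmem : v ∈ Set.Icc (-R) R := by
      rw [Set.mem_Icc]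
      exact abs_le.mp hv
    have := htGcov hmem
    rw [Set.mem_iUnion₂] at this
    obtain ⟨gg, hgg, hball⟩ := this
    exact ⟨gg, hgg, by rwa [Metric.mem_ball, Real.dist_eq] at hball⟩
  -- the finite family of candidate functions
  set bfun : (↥N → ℝ) → (X₁ ⊕ X₂) → ℝ :=
    fun ψ z => N.attach.inf' hNatt (fun n => ψ n + dist z n.1) with hbfundef
  have hbfun_le : ∀ (ψ : ↥N → ℝ) (z : X₁ ⊕ X₂) (n : ↥N), bfun ψ z ≤ ψ n + dist z n.1 :=
    fun ψ z n => Finset.inf'_le _ (Finset.mem_attach _ n)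
  have hbfun_ge : ∀ (ψ : ↥N → ℝ) (z : X₁ ⊕ X₂) (c : ℝ),
      (∀ n : ↥N, c ≤ ψ n + dist z n.1) → c ≤ bfun ψ z := by
    intro ψ z c hc
    rw [hbfundef]
    rw [Finset.le_inf'_iff]
    intro n _
    exact hc n
  have hbfun_lip : ∀ (ψ : ↥N → ℝ) (z w : X₁ ⊕ X₂), |bfun ψ z - bfun ψ w| ≤ dist z w := by
    intro ψ z w
    have key : ∀ z w : X₁ ⊕ X₂, bfun ψ z ≤ bfun ψ w + dist z w := by
      intro z w
      have : bfun ψ z - dist z w ≤ bfun ψ w := by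
        refine hbfun_ge ψ w _ ?_
        intro n
        have h1 : bfun ψ z ≤ ψ n + dist z n.1 := hbfun_le ψ z n
        have h2 : dist z n.1 ≤ dist z w + dist w n.1 := dist_triangle z w n.1
        linarith
      linarith
    rw [abs_sub_le_iff]
    constructor
    · have := key z w; linarith
    · have := key w z
      rw [dist_comm w z] at this
      linarith
  set bF : (↥N → ℝ) → ((lipOUS X₁).prod (lipOUS X₂)).carrier := fun ψ =>
    (⟨bfun ψ ∘ Sum.inl, ⟨1, by
        apply LipschitzWith.of_dist_le_mul
        intro x x'
        rw [Real.dist_eq, NNReal.coe_one, one_mul]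
        exact hbfun_lip ψ (Sum.inl x) (Sum.inl x')⟩⟩,
     ⟨bfun ψ ∘ Sum.inr, ⟨1, by
        apply LipschitzWith.of_dist_le_mul
        intro y y'
        rw [Real.dist_eq, NNReal.coe_one, one_mul]
        exact hbfun_lip ψ (Sum.inr y) (Sum.inr y')⟩⟩) with hbFdef
  have hbFfun : ∀ ψ, bridgeFun X₁ X₂ (bF ψ) = bfun ψ := by
    intro ψ
    funext z
    cases z <;> rfl
  set Ψ : Set (↥N → ℝ) := Set.pi Set.univ (fun _ => tG) with hΨdef
  have hΨfin : Ψ.Finite := Set.Finite.pi (fun _ => htGfin)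
  refine ⟨bF '' Ψ, hΨfin.image _, ?_⟩
  intro a ha hnorm
  set h : X₁ ⊕ X₂ → ℝ := bridgeFun X₁ X₂ a with hhdef
  have hlip : ∀ z w, |h z - h w| ≤ dist z w := by
    intro z w
    calc |h z - h w| ≤ bridgeL X₁ X₂ p q hp hq hδ a * sumDist p q δ z w :=
          bridgeL_lip X₁ X₂ p q hp hq hδ a z w
      _ ≤ 1 * dist z w := by
          refine mul_le_mul_of_nonneg_right ha ?_
          exact dist_nonneg (x := z) (y := w)
      _ = dist z w := one_mul _
  have hval : ∀ z, |h z| ≤ R := by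
    intro z
    have := hlip z (Sum.inl x₀)
    rw [hnorm] at this
    simp only [sub_zero] at this
    exact this.trans (hR z)
  -- pick grid values near the values of `h` at net points
  have hchoice : ∀ n : ↥N, ∃ gg ∈ tG, |h n.1 - gg| < η/4 := fun n => hgrid (h n.1) (hval n.1)
  choose ψa hψa1 hψa2 using hchoice
  have hψamem : ψa ∈ Ψ := by
    rw [hΨdef, Set.mem_pi]
    intro n _
    exact hψa1 n
  refine ⟨bF ψa, ⟨ψa, hψamem, rfl⟩, ?_⟩
  intro z
  rw [hbFfun]
  -- lower bound : bfun ψa z ≥ h z - η/4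
  have hlow : h z - η/4 ≤ bfun ψa z := by
    refine hbfun_ge ψa z _ ?_
    intro n
    have h1 : h n.1 - η/4 ≤ ψa n := by
      have := (abs_le.mp (hψa2 n).le).2
      linarith
    have h2 : h z - h n.1 ≤ dist z n.1 := (abs_le.mp (hlip z n.1)).2
    linarith
  -- upper bound : bfun ψa z ≤ h z + 3η/4
  have hup : bfun ψa z ≤ h z + 3*(η/4) := by
    obtain ⟨n₀, hn₀N, hn₀d⟩ := hNcov z
    have h1 : bfun ψa z ≤ ψa ⟨n₀, hn₀N⟩ + dist z n₀ := hbfun_le ψa z ⟨n₀, hn₀N⟩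
    have h2 : ψa ⟨n₀, hn₀N⟩ ≤ h n₀ + η/4 := by
      have := (abs_le.mp (hψa2 ⟨n₀, hn₀N⟩).le).1
      linarith
    have h3 : h n₀ - h z ≤ dist n₀ z := (abs_le.mp (hlip n₀ z)).2
    rw [dist_comm n₀ z] at h3
    linarith
  rw [abs_sub_le_iff]
  constructor
  · linarith
  · linarith

end BridgeNet

section BridgeLipNorm

variable (X₁ X₂ : Type) [MetricSpace X₁] [CompactSpace X₁] [Nonempty X₁]
  [MetricSpace X₂] [CompactSpace X₂] [Nonempty X₂]
  {Z : Type} [MetricSpace Z] (p : X₁ → Z) (q : X₂ → Z) {δ : ℝ}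
  (hp : Isometry p) (hq : Isometry q) (hδ : 0 < δ)

theorem bridge_order_bound (c : ((lipOUS X₁).prod (lipOUS X₂)).carrier) {M : ℝ}
    (hM : ∀ z, |bridgeFun X₁ X₂ c z| ≤ M) :
    -(M • ((lipOUS X₁).prod (lipOUS X₂)).e) ≤ c ∧
      c ≤ M • ((lipOUS X₁).prod (lipOUS X₂)).e := by
  constructor
  · rw [Prod.le_def]
    constructor
    · rw [← Subtype.coe_le_coe]
      intro x
      have := (abs_le.mp (hM (Sum.inl x))).1
      simpa [bridgeFun, Submodule.coe_smul, Pi.smul_apply, smul_eq_mul] using this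
    · rw [← Subtype.coe_le_coe]
      intro y
      have := (abs_le.mp (hM (Sum.inr y))).1
      simpa [bridgeFun, Submodule.coe_smul, Pi.smul_apply, smul_eq_mul] using this
  · rw [Prod.le_def]
    constructor
    · rw [← Subtype.coe_le_coe]
      intro x
      have := (abs_le.mp (hM (Sum.inl x))).2
      simpa [bridgeFun, Submodule.coe_smul, Pi.smul_apply, smul_eq_mul] using this
    · rw [← Subtype.coe_le_coe]
      intro y
      have := (abs_le.mp (hM (Sum.inr y))).2
      simpa [bridgeFun, Submodule.coe_smul, Pi.smul_apply, smul_eq_mul] using this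

theorem bridgeL_isLipNorm :
    ((lipOUS X₁).prod (lipOUS X₂)).IsLipNorm (bridgeL X₁ X₂ p q hp hq hδ) := by
  classical
  set A := (lipOUS X₁).prod (lipOUS X₂) with hAdef
  set L := bridgeL X₁ X₂ p q hp hq hδ with hLdef
  refine ⟨bridgeL_isLipschitz X₁ X₂ p q hp hq hδ, ?_⟩
  refine le_antisymm (A.ballTopology_le_weak L (bridgeL_isLipschitz X₁ X₂ p q hp hq hδ)) ?_
  rw [ballTopology, TopologicalSpace.le_generateFrom_iff_subset_isOpen]
  rintro U ⟨μ₀, ε, hε, rfl⟩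
  simp only [Set.mem_setOf_eq]
  rw [isOpen_iff_forall_mem_open]
  intro ν₀ hν₀
  rw [Set.mem_setOf_eq] at hν₀
  obtain ⟨γ, hγ0, hγ⟩ := ENNReal.lt_iff_exists_add_pos_lt.mp hν₀
  set g : ℝ := (γ : ℝ) with hgdef
  have hg0 : 0 < g := hγ0
  obtain ⟨x₀⟩ := (inferInstance : Nonempty X₁)
  obtain ⟨F, hFfin, hFnet⟩ := bridge_net X₁ X₂ p q hp hq hδ x₀ (show (0:ℝ) < g/8 by positivity)
  set V : Set A.State := {ν | ∀ b ∈ F, |ν.1 b - ν₀.1 b| < g/2} with hVdef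
  have hVopen : IsOpen V := by
    have : V = ⋂ b ∈ F, {ν : A.State | |ν.1 b - ν₀.1 b| < g/2} := by
      ext ν
      simp [hVdef]
    rw [this]
    refine Set.Finite.isOpen_biInter hFfin ?_
    intro b _
    have hcont : Continuous (fun ν : A.State => ν.1 b) := by
      exact (continuous_apply b).comp continuous_induced_dom
    have : {ν : A.State | |ν.1 b - ν₀.1 b| < g/2} =
        (fun ν : A.State => ν.1 b) ⁻¹' (Metric.ball (ν₀.1 b) (g/2)) := by
      ext ν
      simp [Metric.mem_ball, Real.dist_eq]
    rw [this]
    exact (Metric.isOpen_ball).preimage hcont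
  refine ⟨V, ?_, hVopen, ?_⟩
  · -- V is contained in the ball
    intro ν hν
    rw [Set.mem_setOf_eq]
    have key : A.rho L ν₀ ν ≤ ENNReal.ofReal g := by
      refine A.rho_le_ofReal ?_
      intro a ha
      set t : ℝ := bridgeFun X₁ X₂ a (Sum.inl x₀) with htdef
      set a' := a - t • A.e with ha'def
      have hLa' : L a' ≤ 1 := by
        have h1 : L a' ≤ L a + L (-(t • A.e)) := by
          rw [ha'def, sub_eq_add_neg]
          exact map_add_le_add L a _
        have h2 : L (-(t • A.e)) = 0 := by
          rw [show -(t • A.e) = (-t) • A.e from (neg_smul t A.e).symm]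
          exact bridgeL_smul_e X₁ X₂ p q hp hq hδ (-t)
        rw [h2, add_zero] at h1
        exact h1.trans ha
      have hnorm : bridgeFun X₁ X₂ a' (Sum.inl x₀) = 0 := by
        rw [ha'def, bridgeFun_sub, Pi.sub_apply, bridgeFun_smul_e]
        simp [htdef]
      obtain ⟨b, hbF, hb⟩ := hFnet a' hLa' hnorm
      -- bound on the states applied to a' - b
      have hc : ∀ z, |bridgeFun X₁ X₂ (a' - b) z| ≤ g/8 := by
        intro z
        rw [bridgeFun_sub, Pi.sub_apply]
        exact hb z
      obtain ⟨hob1, hob2⟩ := bridge_order_bound X₁ X₂ (a' - b) hc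
      have hsν₀ : |ν₀.1 (a' - b)| ≤ g/8 := A.state_abs_le ν₀ hob1 hob2
      have hsν : |ν.1 (a' - b)| ≤ g/8 := A.state_abs_le ν hob1 hob2
      have hbV : |ν.1 b - ν₀.1 b| < g/2 := hν b hbF
      -- states agree on multiples of the unit
      have hshift : ∀ κ : A.State, κ.1 a = κ.1 a' + t := by
        intro κ
        rw [ha'def, map_sub, A.state_map_smul_e]
        ring
      have hν₀ab : ν₀.1 (a' - b) = ν₀.1 a' - ν₀.1 b := map_sub _ _ _
      have hνab : ν.1 (a' - b) = ν.1 a' - ν.1 b := map_sub _ _ _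
      have halg : ν₀.1 a - ν.1 a = (ν₀.1 b - ν.1 b) + (ν₀.1 (a' - b) - ν.1 (a' - b)) := by
        rw [hshift ν₀, hshift ν, hν₀ab, hνab]
        ring
      have : |ν₀.1 a - ν.1 a| ≤ g/2 + (g/8 + g/8) := by
        rw [halg]
        calc |(ν₀.1 b - ν.1 b) + (ν₀.1 (a' - b) - ν.1 (a' - b))|
            ≤ |ν₀.1 b - ν.1 b| + |ν₀.1 (a' - b) - ν.1 (a' - b)| := abs_add_le _ _
          _ ≤ g/2 + (|ν₀.1 (a' - b)| + |ν.1 (a' - b)|) := by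
              refine add_le_add ?_ (abs_sub _ _)
              rw [abs_sub_comm]
              exact hbV.le
          _ ≤ g/2 + (g/8 + g/8) := by
              exact add_le_add_right (add_le_add hsν₀ hsν) _
      linarith
    have h2 : A.rho L μ₀ ν ≤ A.rho L μ₀ ν₀ + A.rho L ν₀ ν := A.rho_triangle L μ₀ ν₀ ν
    have h3 : ENNReal.ofReal g ≤ (γ : ℝ≥0∞) := by
      rw [hgdef, ENNReal.ofReal_coe_nnreal]
    calc A.rho L μ₀ ν ≤ A.rho L μ₀ ν₀ + A.rho L ν₀ ν := h2
      _ ≤ A.rho L μ₀ ν₀ + (γ : ℝ≥0∞) := add_le_add_right (key.trans h3) _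
      _ < ε := hγ
  · -- ν₀ belongs to V
    intro b _
    simp [hg0]

end BridgeLipNorm
/-- **Proposition 4.7 of Rieffel.** For nonempty compact metric spaces `(X₁, ρ₁)` and
`(X₂, ρ₂)`, the quantum Gromov–Hausdorff distance between the associated compact
quantum metric spaces `(Lip(X₁), L_{ρ₁})` and `(Lip(X₂), L_{ρ₂})` is at most the
Gromov–Hausdorff distance `dist_GH(X₁, X₂)`. -/
theorem distq_le_ghDist (X₁ X₂ : Type)
    [MetricSpace X₁] [CompactSpace X₁] [Nonempty X₁]
    [MetricSpace X₂] [CompactSpace X₂] [Nonempty X₂]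
    (L₁ : Seminorm ℝ (lipOUS X₁).carrier) (L₂ : Seminorm ℝ (lipOUS X₂).carrier)
    (hL₁ : ∀ f : (lipOUS X₁).carrier, L₁ f = lipConst X₁ f.1)
    (hL₂ : ∀ g : (lipOUS X₂).carrier, L₂ g = lipConst X₂ g.1)
    (hLip₁ : (lipOUS X₁).IsLipNorm L₁) (hLip₂ : (lipOUS X₂).IsLipNorm L₂) :
    (lipOUS X₁).distq (lipOUS X₂) L₁ L₂ ≤
      ENNReal.ofReal (GromovHausdorff.ghDist X₁ X₂) := by
  classical
  set D : ℝ := GromovHausdorff.ghDist X₁ X₂ with hDdef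
  have hD0 : 0 ≤ D := dist_nonneg
  refine ENNReal.le_of_forall_pos_le_add ?_
  intro ε hε _
  set εr : ℝ := (ε : ℝ) with hεrdef
  have hεr0 : 0 < εr := hε
  -- the optimal coupling realizing the Gromov–Hausdorff distance
  set p := GromovHausdorff.optimalGHInjl X₁ X₂ with hpdef
  set q := GromovHausdorff.optimalGHInjr X₁ X₂ with hqdef
  have hp : Isometry p := GromovHausdorff.isometry_optimalGHInjl X₁ X₂
  have hq : Isometry q := GromovHausdorff.isometry_optimalGHInjr X₁ X₂
  have hδ0 : (0:ℝ) < εr/4 := by positivity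
  set L := bridgeL X₁ X₂ p q hp hq hδ0 with hLdef
  -- the bridge seminorm is admissible
  have hadm : L ∈ (lipOUS X₁).admissible (lipOUS X₂) L₁ L₂ := by
    refine ⟨bridgeL_isLipNorm X₁ X₂ p q hp hq hδ0, ?_, ?_⟩
    · intro f
      show L₁ f = _
      rw [hL₁ f]
      exact bridgeL_induces_fst X₁ X₂ p q hp hq hδ0 f
    · intro g
      show L₂ g = _
      rw [hL₂ g]
      exact bridgeL_induces_snd X₁ X₂ p q hp hq hδ0 g
  refine le_trans (iInf₂_le L hadm) ?_
  -- companion maps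
  have hrangeq : (Set.range q).Nonempty := Set.range_nonempty _
  have hrangep : (Set.range p).Nonempty := Set.range_nonempty _
  have hedist : EMetric.hausdorffEdist (Set.range p) (Set.range q) ≠ ⊤ :=
    Metric.hausdorffEdist_ne_top_of_nonempty_of_bounded hrangep hrangeq
      (isCompact_range hp.continuous).isBounded (isCompact_range hq.continuous).isBounded
  have hHD : Metric.hausdorffDist (Set.range p) (Set.range q) = D :=
    GromovHausdorff.hausdorffDist_optimal
  have hT : ∀ x : X₁, ∃ y : X₂, dist (p x) (q y) < D + εr/4 := by
    intro x
    have h1 : Metric.infDist (p x) (Set.range q) ≤ D := by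
      rw [← hHD]
      exact Metric.infDist_le_hausdorffDist_of_mem ⟨x, rfl⟩ hedist
    have h2 : Metric.infDist (p x) (Set.range q) < D + εr/4 := by linarith
    obtain ⟨y, ⟨y', rfl⟩, hy⟩ := (Metric.infDist_lt_iff hrangeq).mp h2
    exact ⟨y', hy⟩
  have hT' : ∀ y : X₂, ∃ x : X₁, dist (p x) (q y) < D + εr/4 := by
    intro y
    have h1 : Metric.infDist (q y) (Set.range p) ≤ D := by
      rw [← hHD, Metric.hausdorffDist_comm]
      exact Metric.infDist_le_hausdorffDist_of_mem ⟨y, rfl⟩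
        (by rwa [EMetric.hausdorffEdist_comm])
    have h2 : Metric.infDist (q y) (Set.range p) < D + εr/4 := by linarith
    obtain ⟨x, ⟨x', rfl⟩, hx⟩ := (Metric.infDist_lt_iff hrangep).mp h2
    refine ⟨x', by rwa [dist_comm]⟩
  set T : X₁ → X₂ := fun x => (hT x).choose with hTdef
  have hTspec : ∀ x, dist (p x) (q (T x)) < D + εr/4 := fun x => (hT x).choose_spec
  set T' : X₂ → X₁ := fun y => (hT' y).choose with hT'def
  have hT'spec : ∀ y, dist (p (T' y)) (q y) < D + εr/4 := fun y => (hT' y).choose_spec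
  -- the cross bound
  set r : ℝ := D + εr/4 + εr/4 with hrdef
  have hr0 : 0 ≤ r := by positivity
  have hrη : r + εr/4 = D + 3*(εr/4) := by ring
  -- 1-Lipschitz bounds for pairs in the unit ball
  have hfLip : ∀ a : ((lipOUS X₁).prod (lipOUS X₂)).carrier, L a ≤ 1 →
      ∀ x x' : X₁, |a.1.1 x - a.1.1 x'| ≤ dist x x' := by
    intro a ha x x'
    have := bridgeL_lip X₁ X₂ p q hp hq hδ0 a (Sum.inl x) (Sum.inl x')
    have h2 : sumDist p q (εr/4) (Sum.inl x) (Sum.inl x') = dist x x' := rfl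
    rw [h2] at this
    calc |a.1.1 x - a.1.1 x'| ≤ L a * dist x x' := this
      _ ≤ 1 * dist x x' := mul_le_mul_of_nonneg_right ha dist_nonneg
      _ = dist x x' := one_mul _
  have hgLip : ∀ a : ((lipOUS X₁).prod (lipOUS X₂)).carrier, L a ≤ 1 →
      ∀ y y' : X₂, |a.2.1 y - a.2.1 y'| ≤ dist y y' := by
    intro a ha y y'
    have := bridgeL_lip X₁ X₂ p q hp hq hδ0 a (Sum.inr y) (Sum.inr y')
    have h2 : sumDist p q (εr/4) (Sum.inr y) (Sum.inr y') = dist y y' := rfl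
    rw [h2] at this
    calc |a.2.1 y - a.2.1 y'| ≤ L a * dist y y' := this
      _ ≤ 1 * dist y y' := mul_le_mul_of_nonneg_right ha dist_nonneg
      _ = dist y y' := one_mul _
  have hcross : ∀ a : ((lipOUS X₁).prod (lipOUS X₂)).carrier, L a ≤ 1 →
      ∀ (x : X₁) (y : X₂), |a.1.1 x - a.2.1 y| ≤ dist (p x) (q y) + εr/4 := by
    intro a ha x y
    have := bridgeL_lip X₁ X₂ p q hp hq hδ0 a (Sum.inl x) (Sum.inr y)
    have h2 : sumDist p q (εr/4) (Sum.inl x) (Sum.inr y) = dist (p x) (q y) + εr/4 := rfl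
    rw [h2] at this
    have h3 : (0:ℝ) ≤ dist (p x) (q y) + εr/4 := by
      have := dist_nonneg (x := p x) (y := q y); linarith
    calc |a.1.1 x - a.2.1 y| ≤ L a * (dist (p x) (q y) + εr/4) := this
      _ ≤ 1 * (dist (p x) (q y) + εr/4) := mul_le_mul_of_nonneg_right ha h3
      _ = dist (p x) (q y) + εr/4 := one_mul _
  -- bound the Hausdorff distance between the state spaces
  have hbound : hausdorffDistWith (((lipOUS X₁).prod (lipOUS X₂)).rho L)
      (Set.range ((lipOUS X₁).leftState (lipOUS X₂)))
      (Set.range ((lipOUS X₁).rightState (lipOUS X₂))) ≤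
      ENNReal.ofReal (D + 3*(εr/4)) := by
    rw [hausdorffDistWith]
    refine max_le ?_ ?_
    · refine iSup₂_le ?_
      rintro - ⟨μ, rfl⟩
      obtain ⟨ν, hν⟩ := state_transfer μ T hr0 hδ0
      refine le_trans (iInf₂_le ((lipOUS X₁).rightState (lipOUS X₂) ν) ⟨ν, rfl⟩) ?_
      rw [← hrη]
      refine OrderUnitSpace.rho_le_ofReal _ ?_
      intro a ha
      have h1 : ∀ x, |a.1.1 x - a.2.1 (T x)| ≤ r := by
        intro x
        refine (hcross a ha x (T x)).trans ?_
        rw [hrdef]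
        have := hTspec x
        linarith
      exact hν a.1 a.2 (hfLip a ha) h1
    · refine iSup₂_le ?_
      rintro - ⟨κ, rfl⟩
      obtain ⟨μ', hμ'⟩ := state_transfer κ T' hr0 hδ0
      refine le_trans (iInf₂_le ((lipOUS X₁).leftState (lipOUS X₂) μ') ⟨μ', rfl⟩) ?_
      rw [← hrη]
      refine OrderUnitSpace.rho_le_ofReal _ ?_
      intro a ha
      have h1 : ∀ y, |a.2.1 y - a.1.1 (T' y)| ≤ r := by
        intro y
        have h2 := hcross a ha (T' y) y
        rw [abs_sub_comm]
        refine h2.trans ?_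
        rw [hrdef]
        have := hT'spec y
        linarith
      have h3 := hμ' a.2 a.1 (hgLip a ha) h1
      rw [abs_sub_comm]
      exact h3
  refine hbound.trans ?_
  rw [ENNReal.ofReal_add hD0 (by positivity)]
  refine add_le_add_right ?_ _
  calc ENNReal.ofReal (3*(εr/4)) ≤ ENNReal.ofReal εr :=
        ENNReal.ofReal_le_ofReal (by linarith)
    _ = (ε : ℝ≥0∞) := by rw [hεrdef, ENNReal.ofReal_coe_nnreal]
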